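/- (Overestimation under cross-ownership of debt when d₁ ≤ d₂.) Let 0 < d₁ ≤ d₂, let (A₁,A₂) be a random vector with P((A₁,A₂) ∈ (0,∞)²) = 1, let M₁,ₙ, M₂,ₙ ∈ (0,1) be sequences strictly increasing to 1, and let V₁,ₙ := v₁,ₙ(A₁,A₂) be the value of firm 1 under cross-ownership of debt only with fractions (M₁,ₙ, M₂,ₙ). Then limₙ P(V₁,ₙ < d₁) = 0, while every lognormal random variable W satisfies P(W < d₁) > 0; in particular the moment-matched lognormal model overestimates the limiting probability of default of firm 1. -/

import Mathlib

open Filter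

open Classical in
/-- The value of firm 1 under cross-ownership of debt only, as a (piecewise-defined)
derivative of the exogenous asset values `(a₁, a₂)`: it equals `a₁ + M₁ d₂` on
`A_ss ∪ A_ds`, `a₁ + M₁ a₂ + M₁ M₂ d₁` on `A_sd`, and
`(a₁ + M₁ a₂)/(1 − M₁ M₂)` on `A_dd`. -/
noncomputable def v1debt (d₁ d₂ M₁ M₂ a₁ a₂ : ℝ) : ℝ :=
  if (d₁ - M₁ * d₂ ≤ a₁ ∧ d₂ - M₂ * d₁ ≤ a₂) ∨
     (a₁ < d₁ - M₁ * d₂ ∧ (1 - M₁ * M₂) * d₂ ≤ M₂ * a₁ + a₂) then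
    a₁ + M₁ * d₂
  else if (1 - M₁ * M₂) * d₁ ≤ a₁ + M₁ * a₂ ∧ a₂ < d₂ - M₂ * d₁ then
    a₁ + M₁ * a₂ + M₁ * M₂ * d₁
  else (a₁ + M₁ * a₂) / (1 - M₁ * M₂)

open MeasureTheory

/-- Pointwise bound: if the exogenous assets are positive and the fractions are close
enough to 1 (in the sense `d₁ * (1 - M₁ * M₂) ≤ a₁`), then firm 1 does not default. -/
lemma v1debt_ge (d₁ d₂ M₁ M₂ a₁ a₂ : ℝ) (hd₁ : 0 < d₁) (hd : d₁ ≤ d₂)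
    (hM₁ : M₁ ∈ Set.Ioo (0 : ℝ) 1) (hM₂ : M₂ ∈ Set.Ioo (0 : ℝ) 1)
    (ha₂ : 0 ≤ a₂) (h : d₁ * (1 - M₁ * M₂) ≤ a₁) :
    d₁ ≤ v1debt d₁ d₂ M₁ M₂ a₁ a₂ := by
  obtain ⟨hM₁0, hM₁1⟩ := hM₁
  obtain ⟨hM₂0, hM₂1⟩ := hM₂
  have hMM : M₁ * M₂ < 1 := by nlinarith
  have hMa : 0 ≤ M₁ * a₂ := mul_nonneg hM₁0.le ha₂
  unfold v1debt
  split_ifs with h1 h2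
  · nlinarith [mul_nonneg hM₁0.le (by linarith : (0:ℝ) ≤ d₂ - d₁),
      mul_pos hd₁ (mul_pos hM₁0 (by linarith : (0:ℝ) < 1 - M₂))]
  · nlinarith
  · rw [le_div_iff₀ (by linarith : (0:ℝ) < 1 - M₁ * M₂)]
    nlinarith

/-- under cross-ownership of debt only with `d₁ ≤ d₂` and exogenous asset
values that are almost surely strictly positive, the actual probability of default of
firm 1 tends to `0` as the fractions increase strictly to 1, while every lognormal
random variable `W` (whose law is the image of a Gaussian under `exp`) satisfies
`P(W < d₁) > 0`; hence the moment-matched lognormal model overestimates the limiting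
probability of default. -/
theorem lognormal_overestimates_limiting_default_probability_debt_only
    (Ω : Type) [MeasurableSpace Ω] (P : Measure Ω) [IsProbabilityMeasure P]
    (A₁ A₂ : Ω → ℝ) (hA₁m : Measurable A₁) (hA₂m : Measurable A₂)
    (hpos : P {ω | 0 < A₁ ω ∧ 0 < A₂ ω} = 1)
    (d₁ d₂ : ℝ) (hd₁ : 0 < d₁) (hd : d₁ ≤ d₂)
    (M₁ M₂ : ℕ → ℝ)
    (hM₁ : ∀ n, M₁ n ∈ Set.Ioo (0 : ℝ) 1) (hM₂ : ∀ n, M₂ n ∈ Set.Ioo (0 : ℝ) 1)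
    (hM₁mono : StrictMono M₁) (hM₂mono : StrictMono M₂)
    (hM₁lim : Tendsto M₁ atTop (nhds 1)) (hM₂lim : Tendsto M₂ atTop (nhds 1))
    (V : ℕ → Ω → ℝ)
    (hV : ∀ n ω, V n ω = v1debt d₁ d₂ (M₁ n) (M₂ n) (A₁ ω) (A₂ ω)) :
    Tendsto (fun n => P {ω | V n ω < d₁}) atTop (nhds 0) ∧
    ∀ (m : ℝ) (v : NNReal), 0 < v →
      0 < ((ProbabilityTheory.gaussianReal m v).map Real.exp) (Set.Iio d₁) := by
  constructor
  · -- the probability of default tends to 0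
    set c : ℕ → ℝ := fun n => d₁ * (1 - M₁ n * M₂ n) with hc
    set F : ℕ → Set Ω := fun n => {ω | A₁ ω < c n} with hF
    have hNmeas : MeasurableSet {ω | 0 < A₁ ω ∧ 0 < A₂ ω} :=
      (measurableSet_lt measurable_const hA₁m).inter (measurableSet_lt measurable_const hA₂m)
    have hN : P {ω | 0 < A₁ ω ∧ 0 < A₂ ω}ᶜ = 0 := by
      rw [measure_compl hNmeas (measure_ne_top _ _), hpos, measure_univ, tsub_self]
    have hclim : Tendsto c atTop (nhds 0) := by
      have : Tendsto (fun n => d₁ * (1 - M₁ n * M₂ n)) atTop (nhds (d₁ * (1 - 1 * 1))) :=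
        tendsto_const_nhds.mul ((tendsto_const_nhds.sub (hM₁lim.mul hM₂lim)))
      simpa using this
    -- each default event is contained in `F n` up to the null set
    have hsub : ∀ n, {ω | V n ω < d₁} ⊆ F n ∪ {ω | 0 < A₁ ω ∧ 0 < A₂ ω}ᶜ := by
      intro n ω hω
      rw [Set.mem_setOf_eq, hV n ω] at hω
      by_cases hωpos : 0 < A₁ ω ∧ 0 < A₂ ω
      · left
        by_contra hlt
        simp only [hF, Set.mem_setOf_eq, not_lt] at hlt
        exact absurd hω (not_lt.mpr (v1debt_ge d₁ d₂ (M₁ n) (M₂ n) (A₁ ω) (A₂ ω) hd₁ hd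
            (hM₁ n) (hM₂ n) hωpos.2.le hlt))
      · right; exact hωpos
    have hFanti : Antitone F := by
      intro n m hnm ω hω
      have h1 : M₁ n ≤ M₁ m := hM₁mono.monotone hnm
      have h2 : M₂ n ≤ M₂ m := hM₂mono.monotone hnm
      have : M₁ n * M₂ n ≤ M₁ m * M₂ m :=
        mul_le_mul h1 h2 (hM₂ n).1.le (lt_of_lt_of_le (hM₁ n).1 h1).le
      have : c m ≤ c n := by
        simp only [hc]
        nlinarith
      exact lt_of_lt_of_le hω this
    have hFinter : P (⋂ n, F n) = 0 := by
      refine measure_mono_null (fun ω hω => ?_) hN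
      simp only [Set.mem_iInter, hF, Set.mem_setOf_eq] at hω
      intro hcon
      have : A₁ ω ≤ 0 := ge_of_tendsto hclim (Eventually.of_forall fun n => (hω n).le)
      exact absurd hcon.1 (not_lt.mpr this)
    have hFlim : Tendsto (fun n => P (F n)) atTop (nhds 0) := by
      have := tendsto_measure_iInter_atTop
        (μ := P) (s := F)
        (fun n => ((measurableSet_lt hA₁m measurable_const)).nullMeasurableSet)
        hFanti ⟨0, measure_ne_top _ _⟩
      rw [hFinter] at this
      exact this
    have hbound : ∀ n, P {ω | V n ω < d₁} ≤ P (F n) := by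
      intro n
      calc P {ω | V n ω < d₁} ≤ P (F n ∪ {ω | 0 < A₁ ω ∧ 0 < A₂ ω}ᶜ) :=
            measure_mono (hsub n)
        _ ≤ P (F n) + P ({ω | 0 < A₁ ω ∧ 0 < A₂ ω}ᶜ) := measure_union_le _ _
        _ = P (F n) := by rw [hN, add_zero]
    exact tendsto_of_tendsto_of_tendsto_of_le_of_le tendsto_const_nhds hFlim
      (fun n => zero_le) hbound
  · -- the lognormal model assigns positive probability of default
    intro m v hv
    rw [Measure.map_apply Real.measurable_exp measurableSet_Iio]
    have hpre : Real.exp ⁻¹' Set.Iio d₁ = Set.Iio (Real.log d₁) := by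
      ext x
      simp [Set.mem_preimage, Set.mem_Iio, Real.lt_log_iff_exp_lt hd₁]
    rw [hpre]
    rw [pos_iff_ne_zero]
    intro h0
    have := (ProbabilityTheory.gaussianReal_absolutelyContinuous' m (by exact_mod_cast hv.ne')) h0
    simp [Real.volume_Iio] at this
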